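/- arXiv:2310.14361 — 3 statements merged into one kernel-verified Lean document; each statement's English description precedes it below -/
import Mathlib

section
/- Let 0 ≤ k ≤ n be integers and let ξ be a primitive (n+1)-th root of unity in ℂ. Then the Gaussian binomial coefficient evaluated at ξ satisfies binom(n,k)_ξ = (-1)^k · ξ^(-k(k+1)/2). -/
/-- The Gaussian binomial coefficient `binom(n,k)_q`, evaluated at `q = ξ`
a primitive `(n+1)`-th root of unity in `ℂ`, equals `(-1)^k · ξ^(-k(k+1)/2)`. -/
theorem gauss_binom_at_primitive_root (n k : ℕ) (hk : k ≤ n) (ξ : ℂ)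
    (hξ : IsPrimitiveRoot ξ (n + 1)) :
    (∏ i ∈ Finset.range k, (1 - ξ ^ (n - i))) / (∏ i ∈ Finset.range k, (1 - ξ ^ (i + 1)))
      = (-1) ^ k * ξ ^ (-((k * (k + 1) / 2 : ℕ) : ℤ)) := by
  have hξ0 : ξ ≠ 0 := hξ.ne_zero (Nat.succ_ne_zero n)
  have hroot : ξ ^ (n + 1) = 1 := hξ.pow_eq_one
  -- each denominator factor is nonzero
  have hfac : ∀ i ∈ Finset.range k, (1 : ℂ) - ξ ^ (i + 1) ≠ 0 := by
    intro i hi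
    rw [Finset.mem_range] at hi
    have hne : ξ ^ (i + 1) ≠ 1 := by
      intro h
      have := (hξ.pow_eq_one_iff_dvd (i + 1)).mp h
      have := Nat.le_of_dvd (Nat.succ_pos i) this
      omega
    intro h
    apply hne
    linear_combination -h
  have hden : (∏ i ∈ Finset.range k, ((1 : ℂ) - ξ ^ (i + 1))) ≠ 0 :=
    Finset.prod_ne_zero_iff.mpr hfac
  have hsum : ∑ i ∈ Finset.range k, (i + 1) = k * (k + 1) / 2 := by
    have h2 : ∑ i ∈ Finset.range k, (i + 1) = ∑ i ∈ Finset.range (k + 1), i := by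
      rw [Finset.sum_range_succ']; simp
    have h3 := Finset.sum_range_id_mul_two (k + 1)
    simp only [Nat.add_sub_cancel] at h3
    have h4 : (k + 1) * k = k * (k + 1) := Nat.mul_comm _ _
    omega
  have hkey : (∏ i ∈ Finset.range k, (1 - ξ ^ (n - i))) * ξ ^ (k * (k + 1) / 2)
      = (-1) ^ k * ∏ i ∈ Finset.range k, (1 - ξ ^ (i + 1)) := by
    rw [← hsum, ← Finset.prod_pow_eq_pow_sum, ← Finset.prod_mul_distrib]
    rw [show ((-1 : ℂ)) ^ k = ∏ _i ∈ Finset.range k, (-1 : ℂ) by simp,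
      ← Finset.prod_mul_distrib]
    apply Finset.prod_congr rfl
    intro i hi
    rw [Finset.mem_range] at hi
    have hin : i ≤ n := le_trans (Nat.le_of_lt hi) hk
    have : ξ ^ (n - i) * ξ ^ (i + 1) = 1 := by
      rw [← pow_add]
      have : n - i + (i + 1) = n + 1 := by omega
      rw [this, hroot]
    calc (1 - ξ ^ (n - i)) * ξ ^ (i + 1)
        = ξ ^ (i + 1) - ξ ^ (n - i) * ξ ^ (i + 1) := by ring
      _ = -1 * (1 - ξ ^ (i + 1)) := by rw [this]; ring
  have hpow0 : ξ ^ (k * (k + 1) / 2) ≠ 0 := pow_ne_zero _ hξ0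
  rw [zpow_neg, zpow_natCast]
  field_simp
  linear_combination hkey
end

section
/- Fix n ≥ 0 and a nonempty subset I⁺ ⊆ ℤ/(n+1)ℤ of labels, with boxes of ℕ×ℕ labeled by (i-j) mod (n+1). For every partition λ there exists a unique smallest I⁺-generated partition π(λ) containing λ; i.e. π(λ) is I⁺-generated, contains λ, and is contained in every I⁺-generated partition containing λ. -/
/-- A box `b ∉ μ` is addable to the Young diagram `μ` if adjoining it again yields a
Young diagram. -/
def Addable (μ : YoungDiagram) (b : ℕ × ℕ) : Prop :=
  b ∉ μ.cells ∧ IsLowerSet (insert b (μ.cells : Set (ℕ × ℕ)))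

/-- The diagonal label of a box `(i,j)`: the residue `(i - j) mod (n+1)`. -/
def boxLabel (n : ℕ) (b : ℕ × ℕ) : ZMod (n + 1) :=
  ((b.1 : ℤ) - (b.2 : ℤ) : ℤ)

/-- `μ` is `I⁺`-generated if every addable box of `μ` has label in `I⁺`. -/
def IsGenerated (n : ℕ) (Iplus : Set (ZMod (n + 1))) (μ : YoungDiagram) : Prop :=
  ∀ b : ℕ × ℕ, Addable μ b → boxLabel n b ∈ Iplus

/-- If `b` is addable to `lam`, `lam ≤ mu` and `b ∉ mu`, then `b` is addable to `mu`. -/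
lemma addable_of_le {lam mu : YoungDiagram} {b : ℕ × ℕ} (h : Addable lam b)
    (hle : lam ≤ mu) (hb : b ∉ mu.cells) : Addable mu b := by
  refine ⟨hb, ?_⟩
  intro x y hyx hx
  rcases hx with rfl | hx
  · rcases eq_or_ne y x with rfl | hne
    · exact Set.mem_insert _ _
    · have hy : y ∈ insert x (lam.cells : Set (ℕ × ℕ)) :=
        h.2 hyx (Set.mem_insert _ _)
      rcases hy with rfl | hy
      · exact absurd rfl hne
      · have : y ∈ mu.cells := hle (Finset.mem_coe.mp hy)
        exact Set.mem_insert_of_mem _ (Finset.mem_coe.mpr this)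
  · exact Set.mem_insert_of_mem _ (mu.isLowerSet hyx hx)

/-- Any box addable to `lam` but whose label is not in `I⁺` belongs to every
`I⁺`-generated diagram containing `lam`. -/
lemma mem_of_generated {n : ℕ} {Iplus : Set (ZMod (n + 1))} {lam mu : YoungDiagram}
    {b : ℕ × ℕ} (h : Addable lam b) (hlab : boxLabel n b ∉ Iplus)
    (hmu : IsGenerated n Iplus mu) (hle : lam ≤ mu) : b ∈ mu.cells := by
  by_contra hb
  exact hlab (hmu b (addable_of_le h hle hb))

/-- There exists an `I⁺`-generated Young diagram containing `lam`. -/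
lemma exists_generated_above (n : ℕ) (Iplus : Set (ZMod (n + 1)))
    (hne : Iplus.Nonempty) (lam : YoungDiagram) :
    ∃ B : YoungDiagram, IsGenerated n Iplus B ∧ lam ≤ B := by
  obtain ⟨a, ha⟩ := hne
  obtain ⟨r, hra, hrm⟩ : ∃ r : ℕ, ((r : ℕ) : ZMod (n + 1)) = a ∧ r < n + 1 :=
    ⟨a.val, by simp [ZMod.natCast_val, ZMod.cast_id], a.val_lt⟩
  obtain ⟨L, hLc, hLr⟩ : ∃ L : ℕ, lam.colLen 0 ≤ L ∧ lam.rowLen 0 ≤ L :=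
    ⟨max (lam.colLen 0) (lam.rowLen 0), le_max_left _ _, le_max_right _ _⟩
  obtain ⟨t, ht⟩ : ∃ t : ℕ, r + t = n + 1 := ⟨n + 1 - r, by omega⟩
  set k : ℕ := L * (n + 1) + r + (n + 1) with hkdef
  set S : ℕ := (n + 1) * (L + k) + t with hSdef
  have hk1 : 1 ≤ k := by omega
  have hmul1 : (n + 1) * L ≤ (n + 1) * (L + k) := Nat.mul_le_mul le_rfl (by omega)
  have hring1 : (n + 1) * L = n * L + L := by ring
  have hSmL : n * L + L ≤ S := by omega
  have hmul2 : (n + 1) * k ≤ (n + 1) * (L + k) := Nat.mul_le_mul le_rfl (by omega)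
  have hring2 : (n + 1) * k = n * k + k := by ring
  have hmul3 : n * (k - 1) ≤ n * k := Nat.mul_le_mul le_rfl (by omega)
  have hcomm : L * (n + 1) = (n + 1) * L := by ring
  have hSk : n * (k - 1) < S := by omega
  -- cast facts
  have h0 : ((n : ZMod (n + 1)) + 1) = 0 := by
    have := ZMod.natCast_self (n + 1)
    push_cast at this
    exact this
  have htc : ((r : ZMod (n + 1))) + (t : ZMod (n + 1)) = (n : ZMod (n + 1)) + 1 := by
    exact_mod_cast congrArg (Nat.cast : ℕ → ZMod (n + 1)) ht
  have hSa : ((S : ℕ) : ZMod (n + 1)) = -a := by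
    have hcast : ((S : ℕ) : ZMod (n + 1)) =
        ((n : ZMod (n + 1)) + 1) * ((L : ZMod (n + 1)) + (k : ZMod (n + 1))) + (t : ZMod (n + 1)) := by
      rw [hSdef]; push_cast; ring
    rw [hcast]
    linear_combination ((L : ZMod (n + 1)) + (k : ZMod (n + 1))) * h0 + htc + h0 - hra
  have hka : ((k : ℕ) : ZMod (n + 1)) = a := by
    have hcast : ((k : ℕ) : ZMod (n + 1)) =
        (L : ZMod (n + 1)) * ((n : ZMod (n + 1)) + 1) + (r : ZMod (n + 1))
          + ((n : ZMod (n + 1)) + 1) := by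
      rw [hkdef]; push_cast; ring
    rw [hcast]
    linear_combination (L : ZMod (n + 1)) * h0 + h0 + hra
  have hlabel : ∀ x y : ℕ, boxLabel n (x, y) = ((x : ZMod (n + 1))) - (y : ZMod (n + 1)) := by
    intro x y
    simp only [boxLabel]
    push_cast
    ring
  -- the big staircase diagram
  set Bc : Finset (ℕ × ℕ) :=
    (Finset.range k ×ˢ Finset.range S).filter (fun p => n * p.1 + p.2 < S) with hBc
  have memB : ∀ x y : ℕ, (x, y) ∈ Bc ↔ x < k ∧ n * x + y < S := by
    intro x y
    simp only [hBc, Finset.mem_filter, Finset.mem_product, Finset.mem_range]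
    constructor
    · rintro ⟨⟨h1, h2⟩, h3⟩; exact ⟨h1, h3⟩
    · rintro ⟨h1, h3⟩; exact ⟨⟨h1, by omega⟩, h3⟩
  have hBlow : IsLowerSet (Bc : Set (ℕ × ℕ)) := by
    rintro ⟨i, j⟩ ⟨i', j'⟩ hle hmem
    have hm := (memB i j).mp (Finset.mem_coe.mp hmem)
    obtain ⟨h1, h2⟩ := hle
    simp only at h1 h2
    refine Finset.mem_coe.mpr ((memB i' j').mpr ⟨by omega, ?_⟩)
    have : n * i' ≤ n * i := Nat.mul_le_mul le_rfl h1
    omega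
  refine ⟨⟨Bc, hBlow⟩, ?_, ?_⟩
  · -- generated
    rintro ⟨i, j⟩ ⟨hnb, hlow⟩
    have hnb' : ¬(i < k ∧ n * i + j < S) := fun h => hnb ((memB i j).mpr h)
    rcases lt_or_ge i k with hik | hik
    · -- i < k : must be an inner corner with n*i + j = S
      have hge : S ≤ n * i + j := by
        by_contra hcon
        push_neg at hcon
        exact hnb' ⟨hik, hcon⟩
      rcases Nat.eq_zero_or_pos j with rfl | hj
      · -- j = 0 : impossible since n*(k-1) < S
        have : n * i ≤ n * (k - 1) := Nat.mul_le_mul le_rfl (by omega)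
        omega
      · -- j ≥ 1 : the box (i, j-1) is in the diagram
        have hmem : (i, j - 1) ∈ insert ((i : ℕ), j) (Bc : Set (ℕ × ℕ)) :=
          hlow (Prod.mk_le_mk.mpr ⟨le_refl i, by omega⟩) (Set.mem_insert _ _)
        rcases hmem with h | h
        · exfalso
          have := congrArg Prod.snd h
          simp only at this
          omega
        · have h' := (memB i (j - 1)).mp (Finset.mem_coe.mp h)
          have heq : n * i + j = S := by omega
          have heqZ : ((n : ZMod (n + 1))) * i + (j : ZMod (n + 1)) = ((S : ℕ) : ZMod (n + 1)) := by
            exact_mod_cast congrArg (Nat.cast : ℕ → ZMod (n + 1)) heq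
          rw [hlabel i j]
          have : ((i : ZMod (n + 1))) - (j : ZMod (n + 1)) = a := by
            linear_combination -heqZ - hSa + (i : ZMod (n + 1)) * h0
          rw [this]; exact ha
    · -- i ≥ k : must be the box (k, 0)
      have hi1 : 1 ≤ i := le_trans hk1 hik
      have hmem : (i - 1, j) ∈ insert ((i : ℕ), j) (Bc : Set (ℕ × ℕ)) :=
        hlow (Prod.mk_le_mk.mpr ⟨by omega, le_refl j⟩) (Set.mem_insert _ _)
      rcases hmem with h | h
      · exfalso
        have := congrArg Prod.fst h
        simp only at this
        omega
      · have h' := (memB (i - 1) j).mp (Finset.mem_coe.mp h)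
        have hieq : i = k := by omega
        have hj0 : j = 0 := by
          by_contra hj
          have hmem2 : (i, j - 1) ∈ insert ((i : ℕ), j) (Bc : Set (ℕ × ℕ)) :=
            hlow (Prod.mk_le_mk.mpr ⟨le_refl i, by omega⟩) (Set.mem_insert _ _)
          rcases hmem2 with h2 | h2
          · have := congrArg Prod.snd h2
            simp only at this
            omega
          · have h2' := (memB i (j - 1)).mp (Finset.mem_coe.mp h2)
            omega
        subst hieq hj0
        rw [hlabel k 0, Nat.cast_zero, sub_zero, hka]
        exact ha
  · -- lam ≤ B
    intro p hp
    rcases p with ⟨i, j⟩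
    have hiL : i < L := by
      have h1 : i < lam.colLen j := YoungDiagram.mem_iff_lt_colLen.mp hp
      have h2 : lam.colLen j ≤ lam.colLen 0 := lam.colLen_anti 0 j (Nat.zero_le _)
      omega
    have hjL : j < L := by
      have h1 : j < lam.rowLen i := YoungDiagram.mem_iff_lt_rowLen.mp hp
      have h2 : lam.rowLen i ≤ lam.rowLen 0 := lam.rowLen_anti 0 i (Nat.zero_le _)
      omega
    refine (memB i j).mpr ⟨by omega, ?_⟩
    have h1 : n * (i + 1) ≤ n * L := Nat.mul_le_mul le_rfl (by omega)
    have h2 : n * (i + 1) = n * i + n := by ring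
    omega

/-- For every partition `λ` there is a unique smallest `I⁺`-generated partition
containing `λ` (for `I⁺` a nonempty set of labels). -/
theorem exists_unique_smallest_generated (n : ℕ) (Iplus : Set (ZMod (n + 1)))
    (hne : Iplus.Nonempty) (lam : YoungDiagram) :
    ∃! π : YoungDiagram, IsGenerated n Iplus π ∧ lam ≤ π ∧
      ∀ μ : YoungDiagram, IsGenerated n Iplus μ → lam ≤ μ → π ≤ μ := by
  obtain ⟨B, hBgen, hBle⟩ := exists_generated_above n Iplus hne lam
  have key : ∀ N : ℕ, ∀ lam' : YoungDiagram, lam' ≤ B →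
      B.cells.card - lam'.cells.card ≤ N →
      ∃ π : YoungDiagram, IsGenerated n Iplus π ∧ lam' ≤ π ∧
        ∀ μ : YoungDiagram, IsGenerated n Iplus μ → lam' ≤ μ → π ≤ μ := by
    intro N
    induction N with
    | zero =>
      intro lam' hle hcard
      have hsub : lam'.cells ⊆ B.cells := hle
      have hcells : lam'.cells = B.cells :=
        Finset.eq_of_subset_of_card_le hsub (by omega)
      have hlam'B : lam' = B := YoungDiagram.ext hcells
      subst hlam'B
      exact ⟨lam', hBgen, le_refl _, fun μ _ h => h⟩
    | succ N ih =>
      intro lam' hle hcard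
      by_cases hgen : IsGenerated n Iplus lam'
      · exact ⟨lam', hgen, le_refl _, fun μ _ h => h⟩
      · simp only [IsGenerated, not_forall] at hgen
        obtain ⟨b, hb, hlab⟩ := hgen
        have hbB : b ∈ B.cells := mem_of_generated hb hlab hBgen hle
        set lam'' : YoungDiagram := ⟨insert b lam'.cells, by
          rw [Finset.coe_insert]
          exact hb.2⟩ with hlam''
        have hsub : lam''.cells ⊆ B.cells := by
          intro c hc
          rcases Finset.mem_insert.mp hc with rfl | hc
          · exact hbB
          · exact hle hc
        have hcard'' : lam''.cells.card = lam'.cells.card + 1 :=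
          Finset.card_insert_of_notMem hb.1
        have hlt : lam'.cells.card < B.cells.card :=
          Finset.card_lt_card ⟨hle, fun h => hb.1 (h hbB)⟩
        obtain ⟨π, hπgen, hπle, hπmin⟩ := ih lam'' hsub (by omega)
        refine ⟨π, hπgen, ?_, ?_⟩
        · exact le_trans (fun c hc => Finset.mem_insert_of_mem hc) hπle
        · intro μ hμgen hμle
          apply hπmin μ hμgen
          intro c hc
          rcases Finset.mem_insert.mp hc with rfl | hc
          · exact mem_of_generated hb hlab hμgen hμle
          · exact hμle hc
  obtain ⟨π, hπ⟩ := key (B.cells.card - lam.cells.card) lam hBle (le_refl _)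
  refine ⟨π, hπ, ?_⟩
  rintro π' ⟨h1, h2, h3⟩
  exact le_antisymm (h3 π hπ.1 hπ.2.1) (hπ.2.2 π' h1 h2)
end

section
/- Consider the Fock space 𝔽 with basis vectors |Y⟩ indexed by partitions Y, and for each c ∈ ℤ the operators E_c |Y⟩ = Σ |Y \ {s}⟩ over removable boxes s of Y with content c, and F_c |Y⟩ = Σ |Y ∪ {s}⟩ over addable boxes s with content c. Then for all c, c' ∈ ℤ with c ≠ c', the operators E_c and F_{c'} commute: [E_c, F_{c'}] = 0. -/
open scoped Classical

/-- Fermionic Fock space: the vector space with basis indexed by partitions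
(Young diagrams). -/
abbrev Fock : Type := YoungDiagram →₀ ℂ

/-- The content of the box `(i,j)` (row `i`, column `j`) is `j - i`. -/
def content (b : ℕ × ℕ) : ℤ := (b.2 : ℤ) - (b.1 : ℤ)

/-- Remove a cell from a Young diagram (returning `μ` unchanged if the result
would not be a Young diagram). -/
noncomputable def eraseCell (μ : YoungDiagram) (s : ℕ × ℕ) : YoungDiagram :=
  if h : IsLowerSet ((μ.cells.erase s : Finset (ℕ × ℕ)) : Set (ℕ × ℕ)) then
    ⟨μ.cells.erase s, h⟩ else μ

/-- Add a cell to a Young diagram (returning `μ` unchanged if the result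
would not be a Young diagram). -/
noncomputable def addCell (μ : YoungDiagram) (b : ℕ × ℕ) : YoungDiagram :=
  if h : IsLowerSet ((insert b μ.cells : Finset (ℕ × ℕ)) : Set (ℕ × ℕ)) then
    ⟨insert b μ.cells, h⟩ else μ

/-- The removable boxes of `μ` of content `c`. -/
def removables (c : ℤ) (μ : YoungDiagram) : Finset (ℕ × ℕ) :=
  μ.cells.filter
    (fun s => (s.1 + 1, s.2) ∉ μ.cells ∧ (s.1, s.2 + 1) ∉ μ.cells ∧ content s = c)

/-- The addable boxes of `μ` of content `c`. -/
def addables (c : ℤ) (μ : YoungDiagram) : Finset (ℕ × ℕ) :=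
  ((Finset.range (μ.colLen 0 + 1)) ×ˢ (Finset.range (μ.rowLen 0 + 1))).filter
    (fun b => b ∉ μ.cells ∧ (∀ i ∈ Finset.range b.1, (i, b.2) ∈ μ.cells) ∧
      (∀ j ∈ Finset.range b.2, (b.1, j) ∈ μ.cells) ∧ content b = c)

/-- `E_c |Y⟩ = Σ |Y \ {s}⟩`, sum over removable boxes `s` of `Y` of content `c`. -/
noncomputable def Eop (c : ℤ) : Fock →ₗ[ℂ] Fock :=
  Finsupp.lsum ℂ (fun μ => LinearMap.toSpanSingleton ℂ Fock
    (∑ s ∈ removables c μ, Finsupp.single (eraseCell μ s) (1 : ℂ)))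

/-- `F_c |Y⟩ = Σ |Y ∪ {s}⟩`, sum over addable boxes `s` of `Y` of content `c`. -/
noncomputable def Fop (c : ℤ) : Fock →ₗ[ℂ] Fock :=
  Finsupp.lsum ℂ (fun μ => LinearMap.toSpanSingleton ℂ Fock
    (∑ b ∈ addables c μ, Finsupp.single (addCell μ b) (1 : ℂ)))

/-- `h_c(Y)`: number of addable boxes of content `c` minus number of removable
boxes of content `c`. -/
def hdiff (c : ℤ) (μ : YoungDiagram) : ℤ :=
  ((addables c μ).card : ℤ) - ((removables c μ).card : ℤ)

/-- `H_c |Y⟩ = h_c(Y) |Y⟩`. -/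
noncomputable def Hop (c : ℤ) : Fock →ₗ[ℂ] Fock :=
  Finsupp.lsum ℂ (fun μ => LinearMap.toSpanSingleton ℂ Fock
    ((hdiff c μ : ℂ) • Finsupp.single μ (1 : ℂ)))

/-- `wt_c(Y)`: the number of boxes of `Y` of content `c`. -/
def wt (c : ℤ) (μ : YoungDiagram) : ℕ :=
  (μ.cells.filter (fun s => content s = c)).card

/-- `D_c |Y⟩ = wt_c(Y) |Y⟩`. -/
noncomputable def Dop (c : ℤ) : Fock →ₗ[ℂ] Fock :=
  Finsupp.lsum ℂ (fun μ => LinearMap.toSpanSingleton ℂ Fock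
    ((wt c μ : ℂ) • Finsupp.single μ (1 : ℂ)))

section Aux

open Finset

lemma mem_removables {c : ℤ} {μ : YoungDiagram} {s : ℕ × ℕ} :
    s ∈ removables c μ ↔
      s ∈ μ ∧ (s.1 + 1, s.2) ∉ μ ∧ (s.1, s.2 + 1) ∉ μ ∧ content s = c := by
  simp [removables, Finset.mem_filter, and_assoc]

lemma addable_bounds {μ : YoungDiagram} {b : ℕ × ℕ}
    (hcol : ∀ i < b.1, (i, b.2) ∈ μ) (hrow : ∀ j < b.2, (b.1, j) ∈ μ) :
    b.1 < μ.colLen 0 + 1 ∧ b.2 < μ.rowLen 0 + 1 := by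
  constructor
  · rcases Nat.eq_zero_or_pos b.1 with h0 | h0
    · omega
    · have : (b.1 - 1, 0) ∈ μ :=
        μ.up_left_mem le_rfl (Nat.zero_le _) (hcol (b.1 - 1) (by omega))
      rw [YoungDiagram.mem_iff_lt_colLen] at this
      omega
  · rcases Nat.eq_zero_or_pos b.2 with h0 | h0
    · omega
    · have : (0, b.2 - 1) ∈ μ :=
        μ.up_left_mem (Nat.zero_le _) le_rfl (hrow (b.2 - 1) (by omega))
      rw [YoungDiagram.mem_iff_lt_rowLen] at this
      omega

lemma mem_addables {c : ℤ} {μ : YoungDiagram} {b : ℕ × ℕ} :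
    b ∈ addables c μ ↔
      b ∉ μ ∧ (∀ i < b.1, (i, b.2) ∈ μ) ∧ (∀ j < b.2, (b.1, j) ∈ μ) ∧ content b = c := by
  constructor
  · intro hb
    simp only [addables, Finset.mem_filter, Finset.mem_product, Finset.mem_range,
      YoungDiagram.mem_cells] at hb
    exact ⟨hb.2.1, hb.2.2.1, hb.2.2.2.1, hb.2.2.2.2⟩
  · rintro ⟨h1, h2, h3, h4⟩
    obtain ⟨hb1, hb2⟩ := addable_bounds h2 h3
    simp only [addables, Finset.mem_filter, Finset.mem_product, Finset.mem_range,
      YoungDiagram.mem_cells]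
    exact ⟨⟨hb1, hb2⟩, h1, h2, h3, h4⟩

lemma erase_lowerSet {μ : YoungDiagram} {s : ℕ × ℕ}
    (h1 : (s.1 + 1, s.2) ∉ μ) (h2 : (s.1, s.2 + 1) ∉ μ) :
    IsLowerSet ((μ.cells.erase s : Finset (ℕ × ℕ)) : Set (ℕ × ℕ)) := by
  intro a x hxa ha
  simp only [Finset.coe_erase, Set.mem_diff, Finset.mem_coe, YoungDiagram.mem_cells,
    Set.mem_singleton_iff] at ha ⊢
  refine ⟨μ.isLowerSet hxa ha.1, ?_⟩
  rintro rfl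
  obtain ⟨hxa1, hxa2⟩ := Prod.mk_le_mk.mp hxa
  rcases lt_or_eq_of_le hxa1 with h | h
  · exact h1 (μ.up_left_mem h hxa2 ha.1)
  · rcases lt_or_eq_of_le hxa2 with h' | h'
    · exact h2 (μ.up_left_mem hxa1 h' ha.1)
    · exact ha.2 (by rw [← Prod.mk.eta (p := x), h, h', Prod.mk.eta])

lemma insert_lowerSet {μ : YoungDiagram} {b : ℕ × ℕ}
    (hcol : ∀ i < b.1, (i, b.2) ∈ μ) (hrow : ∀ j < b.2, (b.1, j) ∈ μ) :
    IsLowerSet ((insert b μ.cells : Finset (ℕ × ℕ)) : Set (ℕ × ℕ)) := by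
  intro a x hxa ha
  simp only [Finset.coe_insert, Set.mem_insert_iff, Finset.mem_coe,
    YoungDiagram.mem_cells] at ha ⊢
  rcases ha with rfl | ha
  · obtain ⟨hxa1, hxa2⟩ := Prod.mk_le_mk.mp hxa
    rcases lt_or_eq_of_le hxa1 with h | h
    · exact Or.inr (μ.up_left_mem le_rfl hxa2 (hcol x.1 h))
    · rcases lt_or_eq_of_le hxa2 with h' | h'
      · exact Or.inr (by rw [← Prod.mk.eta (p := x), h]; exact hrow x.2 h')
      · exact Or.inl (by rw [← Prod.mk.eta (p := x), h, h', Prod.mk.eta])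
  · exact Or.inr (μ.isLowerSet hxa ha)

lemma eraseCell_cells {c : ℤ} {μ : YoungDiagram} {s : ℕ × ℕ} (hs : s ∈ removables c μ) :
    (eraseCell μ s).cells = μ.cells.erase s := by
  obtain ⟨_, h1, h2, _⟩ := mem_removables.mp hs
  rw [eraseCell, dif_pos (erase_lowerSet h1 h2)]

lemma addCell_cells {c : ℤ} {μ : YoungDiagram} {b : ℕ × ℕ} (hb : b ∈ addables c μ) :
    (addCell μ b).cells = insert b μ.cells := by
  obtain ⟨_, h1, h2, _⟩ := mem_addables.mp hb
  rw [addCell, dif_pos (insert_lowerSet h1 h2)]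

lemma content_ne {c c' : ℤ} (h : c ≠ c') {s b : ℕ × ℕ}
    (hs : content s = c) (hb : content b = c') : s ≠ b := by
  rintro rfl; exact h (hs ▸ hb ▸ rfl)

lemma swap_mem₁ {c c' : ℤ} (h : c ≠ c') {μ : YoungDiagram} {b s : ℕ × ℕ}
    (hb : b ∈ addables c' μ) (hs : s ∈ removables c (addCell μ b)) :
    s ∈ removables c μ ∧ b ∈ addables c' (eraseCell μ s) := by
  obtain ⟨hb1, hb2, hb3, hb4⟩ := mem_addables.mp hb
  obtain ⟨hs1, hs2, hs3, hs4⟩ := mem_removables.mp hs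
  have hcells := addCell_cells hb
  have hsb : s ≠ b := content_ne h hs4 hb4
  -- translate membership in addCell μ b
  have hmem : ∀ x : ℕ × ℕ, x ∈ addCell μ b ↔ x = b ∨ x ∈ μ := by
    intro x
    rw [← YoungDiagram.mem_cells, hcells, Finset.mem_insert, YoungDiagram.mem_cells]
  have hs1' : s ∈ μ := by
    rcases (hmem s).mp hs1 with rfl | h'
    · exact absurd rfl hsb
    · exact h'
  have hs2' : (s.1 + 1, s.2) ∉ μ := fun hx => hs2 ((hmem _).mpr (Or.inr hx))
  have hs3' : (s.1, s.2 + 1) ∉ μ := fun hx => hs3 ((hmem _).mpr (Or.inr hx))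
  have hsrem : s ∈ removables c μ := mem_removables.mpr ⟨hs1', hs2', hs3', hs4⟩
  refine ⟨hsrem, ?_⟩
  have hecells := eraseCell_cells hsrem
  have hmem' : ∀ x : ℕ × ℕ, x ∈ eraseCell μ s ↔ x ≠ s ∧ x ∈ μ := by
    intro x
    rw [← YoungDiagram.mem_cells, hecells, Finset.mem_erase, YoungDiagram.mem_cells]
  refine mem_addables.mpr ⟨fun hx => hb1 ((hmem' b).mp hx).2, ?_, ?_, hb4⟩
  · intro i hi
    refine (hmem' _).mpr ⟨?_, hb2 i hi⟩
    intro heq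
    obtain ⟨h1, h2'⟩ := Prod.ext_iff.mp heq
    have h1' : i = s.1 := h1
    have h2'' : b.2 = s.2 := h2'
    apply hs2
    have hbmem : (b.1, b.2) ∈ addCell μ b := by
      rw [Prod.mk.eta]; exact (hmem b).mpr (Or.inl rfl)
    exact (addCell μ b).up_left_mem (by omega) (by omega) hbmem
  · intro j hj
    refine (hmem' _).mpr ⟨?_, hb3 j hj⟩
    intro heq
    obtain ⟨h1, h2'⟩ := Prod.ext_iff.mp heq
    have h1' : b.1 = s.1 := h1
    have h2'' : j = s.2 := h2'
    apply hs3
    have hbmem : (b.1, b.2) ∈ addCell μ b := by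
      rw [Prod.mk.eta]; exact (hmem b).mpr (Or.inl rfl)
    exact (addCell μ b).up_left_mem (by omega) (by omega) hbmem

lemma swap_mem₂ {c c' : ℤ} (h : c ≠ c') {μ : YoungDiagram} {b s : ℕ × ℕ}
    (hs : s ∈ removables c μ) (hb : b ∈ addables c' (eraseCell μ s)) :
    b ∈ addables c' μ ∧ s ∈ removables c (addCell μ b) := by
  obtain ⟨hs1, hs2, hs3, hs4⟩ := mem_removables.mp hs
  obtain ⟨hb1, hb2, hb3, hb4⟩ := mem_addables.mp hb
  have hecells := eraseCell_cells hs
  have hsb : s ≠ b := content_ne h hs4 hb4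
  have hmem' : ∀ x : ℕ × ℕ, x ∈ eraseCell μ s ↔ x ≠ s ∧ x ∈ μ := by
    intro x
    rw [← YoungDiagram.mem_cells, hecells, Finset.mem_erase, YoungDiagram.mem_cells]
  have hb1' : b ∉ μ := fun hx => hb1 ((hmem' b).mpr ⟨hsb.symm, hx⟩)
  have hb2' : ∀ i < b.1, (i, b.2) ∈ μ := fun i hi => ((hmem' _).mp (hb2 i hi)).2
  have hb3' : ∀ j < b.2, (b.1, j) ∈ μ := fun j hj => ((hmem' _).mp (hb3 j hj)).2
  have hbadd : b ∈ addables c' μ := mem_addables.mpr ⟨hb1', hb2', hb3', hb4⟩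
  refine ⟨hbadd, ?_⟩
  have hcells := addCell_cells hbadd
  have hmem : ∀ x : ℕ × ℕ, x ∈ addCell μ b ↔ x = b ∨ x ∈ μ := by
    intro x
    rw [← YoungDiagram.mem_cells, hcells, Finset.mem_insert, YoungDiagram.mem_cells]
  refine mem_removables.mpr ⟨(hmem s).mpr (Or.inr hs1), ?_, ?_, hs4⟩
  · intro hx
    rcases (hmem _).mp hx with heq | hx'
    · obtain ⟨h1, h2'⟩ := Prod.ext_iff.mp heq
      have h1' : s.1 + 1 = b.1 := h1
      have h2'' : s.2 = b.2 := h2'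
      have hm := hb2 s.1 (by omega)
      have hss : s ∈ eraseCell μ s := by
        rw [← h2''] at hm; rwa [Prod.mk.eta] at hm
      exact ((hmem' _).mp hss).1 rfl
    · exact hs2 hx'
  · intro hx
    rcases (hmem _).mp hx with heq | hx'
    · obtain ⟨h1, h2'⟩ := Prod.ext_iff.mp heq
      have h1' : s.1 = b.1 := h1
      have h2'' : s.2 + 1 = b.2 := h2'
      have hm := hb3 s.2 (by omega)
      have hss : s ∈ eraseCell μ s := by
        rw [← h1'] at hm; rwa [Prod.mk.eta] at hm
      exact ((hmem' _).mp hss).1 rfl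
    · exact hs3 hx'

lemma swap_eq {c c' : ℤ} (h : c ≠ c') {μ : YoungDiagram} {b s : ℕ × ℕ}
    (hb : b ∈ addables c' μ) (hs : s ∈ removables c (addCell μ b)) :
    eraseCell (addCell μ b) s = addCell (eraseCell μ s) b := by
  obtain ⟨hsrem, hbadd⟩ := swap_mem₁ h hb hs
  have hsb : b ≠ s := by
    have h1 := (mem_removables.mp hs).2.2.2
    have h2 := (mem_addables.mp hb).2.2.2
    exact content_ne h.symm h2 h1
  ext1
  rw [eraseCell_cells hs, addCell_cells hbadd, addCell_cells hb, eraseCell_cells hsrem,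
    Finset.erase_insert_of_ne hsb]

lemma Eop_single (c : ℤ) (μ : YoungDiagram) :
    Eop c (Finsupp.single μ (1 : ℂ)) =
      ∑ s ∈ removables c μ, Finsupp.single (eraseCell μ s) (1 : ℂ) := by
  rw [Eop, Finsupp.lsum_single, LinearMap.toSpanSingleton_apply, one_smul]

lemma Fop_single (c : ℤ) (μ : YoungDiagram) :
    Fop c (Finsupp.single μ (1 : ℂ)) =
      ∑ b ∈ addables c μ, Finsupp.single (addCell μ b) (1 : ℂ) := by
  rw [Fop, Finsupp.lsum_single, LinearMap.toSpanSingleton_apply, one_smul]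

end Aux

/-- For `c ≠ c'`, the Fock space operators `E_c` and `F_{c'}` commute:
`[E_c, F_{c'}] = 0`. -/
theorem E_F_commute (c c' : ℤ) (h : c ≠ c') :
    (Eop c).comp (Fop c') - (Fop c').comp (Eop c) = 0 := by
  apply Finsupp.lhom_ext
  intro μ x
  have hx : Finsupp.single μ x = x • Finsupp.single μ (1 : ℂ) := by
    rw [Finsupp.smul_single, smul_eq_mul, mul_one]
  simp only [LinearMap.sub_apply, LinearMap.zero_apply, LinearMap.comp_apply, hx, map_smul,
    sub_eq_zero]
  congr 1
  rw [Fop_single, map_sum, Eop_single, map_sum]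
  simp only [Eop_single, Fop_single]
  rw [Finset.sum_sigma', Finset.sum_sigma', sub_eq_zero]
  refine Finset.sum_nbij' (fun p => ⟨p.2, p.1⟩) (fun p => ⟨p.2, p.1⟩) ?_ ?_ ?_ ?_ ?_
  · rintro ⟨b, s⟩ hp
    simp only [Finset.mem_sigma] at hp ⊢
    exact swap_mem₁ h hp.1 hp.2
  · rintro ⟨s, b⟩ hp
    simp only [Finset.mem_sigma] at hp ⊢
    exact swap_mem₂ h hp.1 hp.2
  · rintro ⟨b, s⟩ _; rfl
  · rintro ⟨s, b⟩ _; rfl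
  · rintro ⟨b, s⟩ hp
    simp only [Finset.mem_sigma] at hp
    rw [swap_eq h hp.1 hp.2]
end
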